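/- A finitely generated module M over a Noetherian ring with a single associated prime p and with M_p of length 1 over R_p is compressible: M admits an injective R-module homomorphism into every nonzero submodule of itself. -/

import Mathlib

/-- A univalent module is compressible: it embeds into each of its nonzero submodules. -/
theorem stmt_14 {R M : Type*} [CommRing R] [IsNoetherianRing R]
    [AddCommGroup M] [Module R M] [Module.Finite R M]
    (p : Ideal R) (hp : p.IsPrime)
    (hass : associatedPrimes R M = {p})
    (hlen : IsSimpleModule (Localization.AtPrime p) (LocalizedModule p.primeCompl M)) :
    ∀ N : Submodule R M, N ≠ ⊥ → ∃ φ : M →ₗ[R] N, Function.Injective φ := by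
  intro N hN
  classical
  set S := p.primeCompl with hS
  set ℓ := LocalizedModule.mkLinearMap S M with hℓ
  -- p is an associated prime of N
  have hNnt : Nontrivial N := Submodule.nontrivial_iff_ne_bot.mpr hN
  obtain ⟨q, hq⟩ := associatedPrimes.nonempty R N
  have hqM : q ∈ associatedPrimes R M :=
    associatedPrimes.subset_of_injective N.injective_subtype hq
  rw [hass, Set.mem_singleton_iff] at hqM
  subst hqM
  rename' q => p
  obtain ⟨-, y, hy⟩ := hq
  -- the image of y in the localization is nonzero
  have hy0 : ℓ (y : M) ≠ 0 := by
    intro h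
    rw [← IsLocalizedModule.mk'_one S ℓ] at h
    obtain ⟨s, hs⟩ := (IsLocalizedModule.mk'_eq_zero' ℓ (1 : S)).mp h
    have hsy : (s : R) • y = 0 := Subtype.ext (by simpa [Submonoid.smul_def] using hs)
    have : (s : R) ∈ ((⊥ : Submodule R N).colon {y}).radical :=
      Ideal.le_radical (Submodule.mem_colon_singleton.mpr (by simpa using hsy))
    rw [← hy] at this
    exact s.2 this
  -- N localizes to everything
  have hmem : ℓ (y : M) ∈ N.localized S := ⟨y, y.2, 1, IsLocalizedModule.mk'_one _ _ _⟩
  have hloc : N.localized S ≠ ⊥ := by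
    intro h
    rw [h, Submodule.mem_bot] at hmem
    exact hy0 hmem
  have htop : N.localized S = ⊤ := (hlen.1.2 _).resolve_left hloc
  -- every element of M is carried into N by some element of S
  have key : ∀ m : M, ∃ r : S, (r : R) • m ∈ N := by
    intro m
    have hm : ℓ m ∈ N.localized S := htop ▸ Submodule.mem_top
    obtain ⟨n, hn, s, hns⟩ := hm
    rw [← IsLocalizedModule.mk'_one S ℓ] at hns
    obtain ⟨u, hu⟩ := (IsLocalizedModule.mk'_eq_mk'_iff ℓ n m s 1).mp hns
    refine ⟨u * s, ?_⟩
    have : (u : R) • (s : R) • m = (u : R) • (1 : R) • n := by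
      simpa [Submonoid.smul_def] using hu
    rw [Submonoid.coe_mul, mul_smul, this, one_smul]
    exact N.smul_mem _ hn
  -- a single element of S works, by finite generation
  obtain ⟨k, g, hg⟩ := Module.Finite.exists_fin (R := R) (M := M)
  choose r hr using fun i => key (g i)
  set t : R := ∏ i, (r i : R) with ht_def
  have htS : t ∈ S := Submonoid.prod_mem _ fun i _ => (r i).2
  have ht : ∀ m : M, t • m ∈ N := by
    have hsub : Submodule.span R (Set.range g) ≤ N.comap (t • (LinearMap.id : M →ₗ[R] M)) := by
      rw [Submodule.span_le]
      rintro _ ⟨i, rfl⟩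
      have : t = (r i : R) * ∏ j ∈ Finset.univ.erase i, (r j : R) :=
        (Finset.mul_prod_erase Finset.univ _ (Finset.mem_univ i)).symm
      simp only [Submodule.mem_comap, LinearMap.smul_apply, LinearMap.id_coe, id_eq, SetLike.mem_coe]
      rw [this, mul_comm, mul_smul]
      exact N.smul_mem _ (hr i)
    intro m
    have := hsub (hg ▸ Submodule.mem_top : m ∈ Submodule.span R (Set.range g))
    simpa using this
  -- t acts injectively on M
  have hreg : ∀ x : M, t • x = 0 → x = 0 := by
    intro x hx
    by_contra hx0
    obtain ⟨P, hP, hle⟩ := exists_le_isAssociatedPrime_of_isNoetherianRing R x hx0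
    have hPp : P = p := by
      have : P ∈ associatedPrimes R M := hP
      rwa [hass, Set.mem_singleton_iff] at this
    exact htS (hPp ▸ hle (Submodule.mem_colon_singleton.mpr (by simpa using hx)))
  refine ⟨LinearMap.codRestrict N (t • (LinearMap.id : M →ₗ[R] M)) ht, ?_⟩
  intro a b hab
  have : t • a = t • b := by
    simpa using congrArg Subtype.val hab
  have h0 : t • (a - b) = 0 := by rw [smul_sub, this, sub_self]
  have := hreg _ h0
  exact sub_eq_zero.mp this
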